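/- Let V₁ ~ Gamma(p, 1/σ₁) and V₂ ~ Gamma(q, 1/σ₂) be independent with σ₁ ≤ σ₂. Then V₂/σ₁ has the same distribution as a Gamma(q + L, 1) random variable, where L is an independent negative binomial random variable with parameters q and success probability σ₁/σ₂ (i.e., P(L = l) = C(q+l−1, l)(1 − σ₁/σ₂)^l (σ₁/σ₂)^q for l = 0, 1, 2, …). -/

import Mathlib

open MeasureTheory Set ProbabilityTheory
open scoped ENNReal NNReal

private lemma aux_map (f : ℝ → ℝ≥0∞) (hf : Measurable f) {c : ℝ} (hc : 0 < c) :
    ((volume : Measure ℝ).withDensity f).map (fun v => v / c) =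
      (volume : Measure ℝ).withDensity (fun y => ENNReal.ofReal c * f (c * y)) := by
  have hT : Measurable fun v : ℝ => v / c := measurable_id.div_const c
  ext s hs
  rw [Measure.map_apply hT hs, withDensity_apply _ (hT hs), withDensity_apply _ hs,
    ← lintegral_indicator (hT hs)]
  have hvol : (volume : Measure ℝ) = ENNReal.ofReal |c| • (volume : Measure ℝ).map (c * ·) :=
    (Real.smul_map_volume_mul_left hc.ne').symm
  calc ∫⁻ x, ((fun v => v / c) ⁻¹' s).indicator f x ∂volume
      = ∫⁻ x, ((fun v => v / c) ⁻¹' s).indicator f x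
          ∂(ENNReal.ofReal |c| • (volume : Measure ℝ).map (c * ·)) := by rw [← hvol]
    _ = ENNReal.ofReal c * ∫⁻ y, ((fun v => v / c) ⁻¹' s).indicator f (c * y) ∂volume := by
        rw [lintegral_smul_measure, lintegral_map (hf.indicator (hT hs))
          (measurable_const_mul c), abs_of_pos hc, smul_eq_mul]
    _ = ENNReal.ofReal c * ∫⁻ y, s.indicator (fun z => f (c * z)) y ∂volume := by
        congr 1
        refine lintegral_congr fun y => ?_
        have hmem : c * y ∈ (fun v => v / c) ⁻¹' s ↔ y ∈ s := by
          simp [mem_preimage, mul_div_cancel_left₀ y hc.ne']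
        by_cases hy : y ∈ s
        · rw [Set.indicator_of_mem hy, Set.indicator_of_mem (hmem.mpr hy)]
        · rw [Set.indicator_of_notMem hy, Set.indicator_of_notMem (fun h => hy (hmem.mp h))]
    _ = ∫⁻ y in s, ENNReal.ofReal c * f (c * y) ∂volume := by
        rw [lintegral_indicator hs _, lintegral_const_mul' _ _ ENNReal.ofReal_ne_top]

private lemma gammaPDFReal_nat (m : ℕ) (r x : ℝ) (hx : 0 ≤ x) :
    gammaPDFReal (1 + (m : ℝ)) r x
      = r ^ (1 + m) / (Nat.factorial m : ℝ) * x ^ m * Real.exp (-(r * x)) := by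
  rw [gammaPDFReal, if_pos hx]
  have h2 : (1 : ℝ) + (m : ℝ) - 1 = ((m : ℕ) : ℝ) := by norm_num
  rw [h2, Real.rpow_natCast,
    show (1 : ℝ) + (m : ℝ) = (m : ℝ) + 1 by ring,
    Real.Gamma_nat_eq_factorial,
    show (m : ℝ) + 1 = ((1 + m : ℕ) : ℝ) by push_cast; ring,
    Real.rpow_natCast]

theorem stmt10 (q : ℕ) (hq : 1 ≤ q) (σ₁ σ₂ : ℝ) (h1 : 0 < σ₁) (h12 : σ₁ ≤ σ₂) :
    (gammaMeasure q (1 / σ₂)).map (fun v => v / σ₁) =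
      Measure.sum (fun l : ℕ =>
        (ENNReal.ofReal
            ((Nat.choose (q + l - 1) l : ℝ) * (1 - σ₁ / σ₂) ^ l * (σ₁ / σ₂) ^ q)) •
          gammaMeasure (q + l) 1) := by
  obtain ⟨m, rfl⟩ : ∃ m, q = 1 + m := ⟨q - 1, by omega⟩
  have h2 : 0 < σ₂ := lt_of_lt_of_le h1 h12
  set θ : ℝ := σ₁ / σ₂ with hθ
  have hθ0 : 0 < θ := div_pos h1 h2
  have hθ1 : θ ≤ 1 := (div_le_one h2).mpr h12
  have h1θ : (0:ℝ) ≤ 1 - θ := by linarith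
  have ha : ((1 + m : ℕ) : ℝ) = 1 + (m : ℝ) := by push_cast; ring
  -- Step 1: the map is a gamma measure with rate θ
  have step1 : (gammaMeasure (1 + m : ℕ) (1 / σ₂)).map (fun v => v / σ₁) =
      gammaMeasure (1 + m : ℕ) θ := by
    simp only [gammaMeasure]
    rw [aux_map (gammaPDF (((1 + m : ℕ) : ℝ)) (1 / σ₂)) ((measurable_gammaPDFReal _ _).ennreal_ofReal) h1]
    congr 1
    funext y
    rcases lt_or_ge y 0 with hy | hy
    · rw [gammaPDF_of_neg hy, gammaPDF_of_neg (by nlinarith), mul_zero]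
    · have hxy : 0 ≤ σ₁ * y := by positivity
      simp only [gammaPDF]
      rw [ha, gammaPDFReal_nat _ _ _ hxy, gammaPDFReal_nat _ _ _ hy,
        ← ENNReal.ofReal_mul h1.le]
      congr 1
      rw [show -(1 / σ₂ * (σ₁ * y)) = -(θ * y) by rw [hθ]; field_simp]
      rw [mul_pow]
      rw [hθ]
      field_simp
      ring
  rw [step1]
  simp only [gammaMeasure, ha]
  have hch : ∀ l : ℕ, 1 + m + l - 1 = m + l := fun l => by omega
  simp only [hch, gammaMeasure]
  have hmeas : ∀ l : ℕ, Measurable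
      ((ENNReal.ofReal (((m + l).choose l : ℝ) * (1 - θ) ^ l * θ ^ (1 + m))) •
        gammaPDF (1 + (m:ℝ) + (l:ℝ)) 1) := fun l =>
    ((measurable_gammaPDFReal _ _).ennreal_ofReal).const_smul _
  have hsmul : ∀ l : ℕ,
      (ENNReal.ofReal (((m + l).choose l : ℝ) * (1 - θ) ^ l * θ ^ (1 + m))) •
          (volume : Measure ℝ).withDensity (gammaPDF (1 + (m:ℝ) + (l:ℝ)) 1)
        = (volume : Measure ℝ).withDensity
            ((ENNReal.ofReal (((m + l).choose l : ℝ) * (1 - θ) ^ l * θ ^ (1 + m))) •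
              gammaPDF (1 + (m:ℝ) + (l:ℝ)) 1) := fun l =>
    (withDensity_smul _ (measurable_gammaPDFReal _ _).ennreal_ofReal).symm
  simp only [hsmul]
  rw [← withDensity_tsum hmeas]
  congr 1
  funext x
  rw [tsum_apply (Pi.summable.mpr fun _ => ENNReal.summable)]
  simp only [Pi.smul_apply, smul_eq_mul]
  refine Eq.symm ?_
  rcases lt_or_ge x 0 with hx | hx
  · simp [gammaPDF_of_neg hx]
  · have hcl : ∀ l : ℕ, (0:ℝ) ≤ ((m + l).choose l : ℝ) * (1 - θ) ^ l * θ ^ (1 + m) := by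
      intro l; positivity
    have hpdf : ∀ l : ℕ, gammaPDF (1 + (m:ℝ) + (l:ℝ)) 1 x =
        ENNReal.ofReal (1 / (Nat.factorial (m + l) : ℝ) * x ^ (m + l) * Real.exp (-x)) := by
      intro l
      simp only [gammaPDF]
      rw [show (1 + (m:ℝ) + (l:ℝ)) = 1 + ((m + l : ℕ) : ℝ) by push_cast; ring,
        gammaPDFReal_nat _ _ _ hx]
      norm_num
    have hterm : ∀ l : ℕ,
        ((m + l).choose l : ℝ) * (1 - θ) ^ l * θ ^ (1 + m) *
          (1 / (Nat.factorial (m + l) : ℝ) * x ^ (m + l) * Real.exp (-x)) =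
        (θ ^ (1 + m) * x ^ m * Real.exp (-x) / (Nat.factorial m : ℝ)) *
          (((1 - θ) * x) ^ l / (Nat.factorial l : ℝ)) := by
      intro l
      have key : (((m + l).choose l : ℕ) : ℝ) * (Nat.factorial l : ℝ) * (Nat.factorial m : ℝ)
          = (Nat.factorial (m + l) : ℝ) := by
        have h := Nat.choose_mul_factorial_mul_factorial (Nat.le_add_left l m)
        rw [Nat.add_sub_cancel] at h
        exact_mod_cast h
      have hml : (Nat.factorial (m + l) : ℝ) ≠ 0 := Nat.cast_ne_zero.mpr (Nat.factorial_ne_zero _)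
      have hl : (Nat.factorial l : ℝ) ≠ 0 := Nat.cast_ne_zero.mpr (Nat.factorial_ne_zero _)
      have hm : (Nat.factorial m : ℝ) ≠ 0 := Nat.cast_ne_zero.mpr (Nat.factorial_ne_zero _)
      rw [mul_pow, pow_add]
      field_simp
      linear_combination ((1 - θ) ^ l * x ^ m * x ^ l) * key
    have hsummable : Summable (fun l : ℕ =>
        ((m + l).choose l : ℝ) * (1 - θ) ^ l * θ ^ (1 + m) *
          (1 / (Nat.factorial (m + l) : ℝ) * x ^ (m + l) * Real.exp (-x))) :=
      Summable.congr ((Real.summable_pow_div_factorial ((1 - θ) * x)).mul_left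
        (θ ^ (1 + m) * x ^ m * Real.exp (-x) / (Nat.factorial m : ℝ))) fun l => (hterm l).symm
    calc (∑' l : ℕ, ENNReal.ofReal (((m + l).choose l : ℝ) * (1 - θ) ^ l * θ ^ (1 + m)) *
            gammaPDF (1 + (m:ℝ) + (l:ℝ)) 1 x)
        = ∑' l : ℕ, ENNReal.ofReal (((m + l).choose l : ℝ) * (1 - θ) ^ l * θ ^ (1 + m) *
            (1 / (Nat.factorial (m + l) : ℝ) * x ^ (m + l) * Real.exp (-x))) := by
          refine tsum_congr fun l => ?_
          rw [hpdf l, ← ENNReal.ofReal_mul (hcl l)]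
      _ = ENNReal.ofReal (∑' l : ℕ, ((m + l).choose l : ℝ) * (1 - θ) ^ l * θ ^ (1 + m) *
            (1 / (Nat.factorial (m + l) : ℝ) * x ^ (m + l) * Real.exp (-x))) := by
          refine (ENNReal.ofReal_tsum_of_nonneg (fun l => ?_) hsummable).symm
          positivity
      _ = gammaPDF (1 + (m:ℝ)) θ x := by
          simp only [gammaPDF]
          rw [gammaPDFReal_nat _ _ _ hx]
          congr 1
          rw [tsum_congr hterm, tsum_mul_left,
            show (∑' l : ℕ, ((1 - θ) * x) ^ l / (Nat.factorial l : ℝ))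
              = Real.exp ((1 - θ) * x) by
              rw [Real.exp_eq_exp_ℝ, NormedSpace.exp_eq_tsum_div],
            ]
          have hexp : Real.exp (-x) * Real.exp ((1 - θ) * x) = Real.exp (-(θ * x)) := by
            rw [← Real.exp_add]; congr 1; ring
          linear_combination (θ ^ (1 + m) * x ^ m / (Nat.factorial m : ℝ)) * hexp
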